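/- Let I be a countable set and let N be a *-algebra of bounded ℓ^∞(I)-bimodular operators on ℓ²(I^{n+1}) (with bimodule structure (F·ξ·F')(i) = F(i_0) ξ(i) F'(i_n)). Fix i ∈ I and suppose that the compression map T ↦ T(p_i ⊗ 1^{⊗n}) is injective on N and has finite-rank image for every T ∈ N. Then the functional Tr_ℓ(T) = Tr(T(p_i ⊗ 1^{⊗n})) (ordinary trace of a finite-rank operator) is a trace on N, i.e. Tr_ℓ(TS) = Tr_ℓ(ST) for all T, S ∈ N. -/

import Mathlib

open scoped InnerProductSpace

section Aux

variable {H : Type*} [NormedAddCommGroup H] [InnerProductSpace ℂ H] [CompleteSpace H]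
  {ι : Type*}

/-- Trace of a finite-rank operator via a Hilbert basis equals trace via a finite
family containing its range. -/
lemma aux_tsum_trace (b : HilbertBasis ι ℂ H) {m : ℕ} (v : Fin m → H)
    (C : H →L[ℂ] H) (hC : ∀ x, C x = ∑ j, (inner ℂ (v j) (C x) : ℂ) • v j) :
    ∑' f, (inner ℂ (C (b f)) (b f) : ℂ) = ∑ j, (inner ℂ (C (v j)) (v j) : ℂ) := by
  have h1 : ∀ f : ι, (inner ℂ (C (b f)) (b f) : ℂ)
      = ∑ j, (inner ℂ (v j) (b f) : ℂ) *
          (inner ℂ (b f) ((ContinuousLinearMap.adjoint C) (v j)) : ℂ) := by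
    intro f
    conv_lhs => rw [hC (b f)]
    rw [sum_inner]
    refine Finset.sum_congr rfl fun j _ => ?_
    rw [inner_smul_left, inner_conj_symm, ← ContinuousLinearMap.adjoint_inner_right C,
      mul_comm]
  rw [tsum_congr h1, Summable.tsum_finsetSum (fun j _ => b.summable_inner_mul_inner _ _)]
  refine Finset.sum_congr rfl fun j _ => ?_
  rw [b.tsum_inner_mul_inner, ContinuousLinearMap.adjoint_inner_right]

omit [CompleteSpace H] in
lemma aux_cyclic {m : ℕ} (v : Fin m → H) (A B : H →L[ℂ] H)
    (hA : ∀ x, A x = ∑ j, (inner ℂ (v j) (A x) : ℂ) • v j)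
    (hB : ∀ x, B x = ∑ j, (inner ℂ (v j) (B x) : ℂ) • v j) :
    ∑ j, (inner ℂ (A (B (v j))) (v j) : ℂ) = ∑ j, (inner ℂ (B (A (v j))) (v j) : ℂ) := by
  have hexp : ∀ (A B : H →L[ℂ] H),
      (∀ x, B x = ∑ j, (inner ℂ (v j) (B x) : ℂ) • v j) →
      ∀ j, (inner ℂ (A (B (v j))) (v j) : ℂ)
        = ∑ k, (inner ℂ (B (v j)) (v k) : ℂ) * (inner ℂ (A (v k)) (v j) : ℂ) := by
    intro A B hB j
    conv_lhs => rw [hB (v j)]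
    rw [map_sum, sum_inner]
    refine Finset.sum_congr rfl fun k _ => ?_
    rw [map_smul, inner_smul_left, inner_conj_symm]
  rw [Finset.sum_congr rfl (fun j _ => hexp A B hB j),
    Finset.sum_congr rfl (fun j _ => hexp B A hA j), Finset.sum_comm]
  exact Finset.sum_congr rfl fun k _ => Finset.sum_congr rfl fun j _ => mul_comm _ _

end Aux

/-- The Hilbert space `ℓ²(I^{n+1})`. -/
noncomputable abbrev Hsp12 (I : Type*) (n : ℕ) : Type _ :=
  lp (fun _ : Fin (n + 1) → I => ℂ) 2

set_option maxHeartbeats 1000000 in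
set_option synthInstance.maxHeartbeats 400000 in
/-- Let `N` be a `*`-algebra of bounded `ℓ^∞(I)`-bimodular operators on `ℓ²(I^{n+1})`
(commuting with the left multiplications `Pleft k = p_k ⊗ 1^{⊗n}` and right
multiplications `Pright k = 1^{⊗n} ⊗ p_k`). If the compression `T ↦ T (p_i ⊗ 1^{⊗n})`
is injective on `N` with finite-rank values, then `Tr_ℓ(T) = Tr(T (p_i ⊗ 1^{⊗n}))`
is a trace on `N`: `Tr_ℓ(TS) = Tr_ℓ(ST)`. -/
theorem stmt_12 {I : Type*} [Countable I] [DecidableEq I] (n : ℕ) (i : I)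
    (e : (Fin (n + 1) → I) → Hsp12 I n)
    (he : ∀ f, e f = lp.single 2 f (1 : ℂ))
    (Pleft Pright : I → (Hsp12 I n →L[ℂ] Hsp12 I n))
    (hPl : ∀ k f, Pleft k (e f) = if f 0 = k then e f else 0)
    (hPr : ∀ k f, Pright k (e f) = if f (Fin.last n) = k then e f else 0)
    (N : StarSubalgebra ℂ (Hsp12 I n →L[ℂ] Hsp12 I n))
    (hbimod : ∀ T ∈ N, ∀ k : I,
      T ∘L Pleft k = Pleft k ∘L T ∧ T ∘L Pright k = Pright k ∘L T)
    (hinj : ∀ T ∈ N, ∀ S ∈ N, T ∘L Pleft i = S ∘L Pleft i → T = S)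
    (hfr : ∀ T ∈ N, FiniteDimensional ℂ (LinearMap.range (T ∘L Pleft i : Hsp12 I n →ₗ[ℂ] Hsp12 I n)))
    (Trl : (Hsp12 I n →L[ℂ] Hsp12 I n) → ℂ)
    (hTrl : ∀ T, Trl T = ∑' f : Fin (n + 1) → I,
      (inner ℂ ((T ∘L Pleft i) (e f)) (e f) : ℂ)) :
    ∀ T ∈ N, ∀ S ∈ N, Trl (T * S) = Trl (S * T) := by
  intro T hT S hS
  -- the canonical Hilbert basis of ℓ²
  let b : HilbertBasis (Fin (n + 1) → I) ℂ (Hsp12 I n) := default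
  have hbe : ∀ f, b f = e f := by
    intro f
    rw [he f, ← HilbertBasis.repr_symm_single b f]
    rfl
  -- P is idempotent
  have hdense : Dense (Submodule.span ℂ (Set.range ⇑b) : Set (Hsp12 I n)) :=
    Submodule.dense_iff_topologicalClosure_eq_top.mpr b.dense_span
  have hP2 : Pleft i ∘L Pleft i = Pleft i := by
    refine ContinuousLinearMap.ext_on hdense ?_
    rintro _ ⟨f, rfl⟩
    simp only [ContinuousLinearMap.comp_apply, hbe, hPl]
    split_ifs with h
    · rw [hPl, if_pos h]
    · rw [map_zero]
  have hP2x : ∀ x, Pleft i (Pleft i x) = Pleft i x := fun x =>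
    congrFun (congrArg DFunLike.coe hP2) x
  -- compression is multiplicative
  have hcomp : ∀ T' ∈ N, ∀ S' ∈ N, ∀ x : Hsp12 I n,
      ((T' * S') ∘L Pleft i) x = (T' ∘L Pleft i) ((S' ∘L Pleft i) x) := by
    intro T' hT' S' hS' x
    have h1 : ∀ y, Pleft i (S' y) = S' (Pleft i y) := fun y =>
      (congrFun (congrArg DFunLike.coe (hbimod S' hS' i).1) y).symm
    simp only [ContinuousLinearMap.comp_apply, ContinuousLinearMap.mul_apply]
    rw [h1, hP2x]
  -- the finite-dimensional subspace containing both ranges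
  haveI hfT := hfr T hT
  haveI hfS := hfr S hS
  set V : Submodule ℂ (Hsp12 I n) :=
    LinearMap.range (T ∘L Pleft i : Hsp12 I n →ₗ[ℂ] Hsp12 I n) ⊔
      LinearMap.range (S ∘L Pleft i : Hsp12 I n →ₗ[ℂ] Hsp12 I n) with hV
  haveI : FiniteDimensional ℂ V := Submodule.finiteDimensional_sup _ _
  let ob := stdOrthonormalBasis ℂ V
  set m := Module.finrank ℂ V
  let v : Fin m → Hsp12 I n := fun j => (ob j : Hsp12 I n)
  have hmem : ∀ x : Hsp12 I n, x ∈ V → x = ∑ j, (inner ℂ (v j) x : ℂ) • v j := by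
    intro x hx
    have h := congrArg (Submodule.subtype V) (ob.sum_repr ⟨x, hx⟩)
    simp only [map_sum, map_smul, Submodule.subtype_apply] at h
    calc x = ∑ j, ob.repr ⟨x, hx⟩ j • v j := h.symm
      _ = ∑ j, (inner ℂ (v j) x : ℂ) • v j := by
          refine Finset.sum_congr rfl fun j _ => ?_
          rw [ob.repr_apply_apply]
          rfl
  have hAmem : ∀ x, (T ∘L Pleft i) x ∈ V := fun x =>
    le_sup_left (α := Submodule ℂ (Hsp12 I n)) (LinearMap.mem_range_self _ x)
  have hBmem : ∀ x, (S ∘L Pleft i) x ∈ V := fun x =>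
    le_sup_right (α := Submodule ℂ (Hsp12 I n)) (LinearMap.mem_range_self _ x)
  have hA : ∀ x, (T ∘L Pleft i) x = ∑ j, (inner ℂ (v j) ((T ∘L Pleft i) x) : ℂ) • v j :=
    fun x => hmem _ (hAmem x)
  have hB : ∀ x, (S ∘L Pleft i) x = ∑ j, (inner ℂ (v j) ((S ∘L Pleft i) x) : ℂ) • v j :=
    fun x => hmem _ (hBmem x)
  have hCTS : ∀ x, ((T * S) ∘L Pleft i) x = ∑ j,
      (inner ℂ (v j) (((T * S) ∘L Pleft i) x) : ℂ) • v j := by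
    intro x
    refine hmem _ ?_
    rw [hcomp T hT S hS x]
    exact hAmem _
  have hCST : ∀ x, ((S * T) ∘L Pleft i) x = ∑ j,
      (inner ℂ (v j) (((S * T) ∘L Pleft i) x) : ℂ) • v j := by
    intro x
    refine hmem _ ?_
    rw [hcomp S hS T hT x]
    exact hBmem _
  rw [hTrl, hTrl]
  have e1 : ∑' f : Fin (n + 1) → I, (inner ℂ (((T * S) ∘L Pleft i) (e f)) (e f) : ℂ)
      = ∑ j, (inner ℂ (((T * S) ∘L Pleft i) (v j)) (v j) : ℂ) := by
    have h := aux_tsum_trace b v _ hCTS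
    simp only [hbe] at h
    exact h
  have e2 : ∑' f : Fin (n + 1) → I, (inner ℂ (((S * T) ∘L Pleft i) (e f)) (e f) : ℂ)
      = ∑ j, (inner ℂ (((S * T) ∘L Pleft i) (v j)) (v j) : ℂ) := by
    have h := aux_tsum_trace b v _ hCST
    simp only [hbe] at h
    exact h
  rw [e1, e2]
  have l1 : ∀ j : Fin m, (inner ℂ (((T * S) ∘L Pleft i) (v j)) (v j) : ℂ)
      = (inner ℂ ((T ∘L Pleft i) ((S ∘L Pleft i) (v j))) (v j) : ℂ) := fun j => by
    rw [hcomp T hT S hS]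
  have l2 : ∀ j : Fin m, (inner ℂ (((S * T) ∘L Pleft i) (v j)) (v j) : ℂ)
      = (inner ℂ ((S ∘L Pleft i) ((T ∘L Pleft i) (v j))) (v j) : ℂ) := fun j => by
    rw [hcomp S hS T hT]
  rw [Finset.sum_congr rfl fun j _ => l1 j, Finset.sum_congr rfl fun j _ => l2 j]
  exact aux_cyclic v _ _ hA hB
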